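/- An Apollonian network with n vertices contains exactly n - 3 subgraphs isomorphic to the complete graph K4. -/

import Mathlib

open SimpleGraph

/-- The complete graph `K4` on the vertices `{0,1,2,3}` of `ℕ`. -/
def K4n : SimpleGraph ℕ where
  Adj x y := x ≠ y ∧ x < 4 ∧ y < 4
  symm := ⟨fun _ _ h => ⟨h.1.symm, h.2.2, h.2.1⟩⟩
  loopless := ⟨fun _ h => h.1 rfl⟩

/-- Add a new apex vertex `v` joined to the three vertices `a`, `b`, `c`. -/
def addApex (G : SimpleGraph ℕ) (v a b c : ℕ) : SimpleGraph ℕ :=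
  G ⊔ SimpleGraph.fromEdgeSet {s(v, a), s(v, b), s(v, c)}

/-- `ApollonianF G Fs` : `G` is an Apollonian network with set of (triangular) faces `Fs`,
built from `K4` by recursively subdividing a triangular face. -/
inductive ApollonianF : SimpleGraph ℕ → Set (Finset ℕ) → Prop
  | base : ApollonianF K4n {{0, 1, 2}, {0, 1, 3}, {0, 2, 3}, {1, 2, 3}}
  | subdivide (G : SimpleGraph ℕ) (Fs : Set (Finset ℕ)) (a b c v : ℕ) :
      ApollonianF G Fs → ({a, b, c} : Finset ℕ) ∈ Fs →
      (∀ y, ¬ G.Adj v y) →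
      ApollonianF (addApex G v a b c)
        ((Fs \ {({a, b, c} : Finset ℕ)}) ∪ {{v, a, b}, {v, a, c}, {v, b, c}})

/-- A graph (on vertex set its support) is an Apollonian network. -/
def IsApollonian (G : SimpleGraph ℕ) : Prop := ∃ Fs, ApollonianF G Fs

/-- The triangles (sets of three pairwise adjacent vertices) of `G`. -/
def triangleSet (G : SimpleGraph ℕ) : Set (Finset ℕ) :=
  {t | ∃ a b c : ℕ, t = {a, b, c} ∧ G.Adj a b ∧ G.Adj a c ∧ G.Adj b c}

/-- A triangle is separating if deleting its vertices disconnects the graph. -/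
def IsSeparatingTriangle (G : SimpleGraph ℕ) (t : Finset ℕ) : Prop :=
  t ∈ triangleSet G ∧ ¬ (G.induce (G.support \ ↑t)).Connected

/-- `G` is (isomorphic to) the complete graph on four vertices. -/
def IsK4Graph (G : SimpleGraph ℕ) : Prop :=
  ∃ s : Finset ℕ, ↑s = G.support ∧ s.card = 4 ∧ ∀ a ∈ s, ∀ b ∈ s, a ≠ b → G.Adj a b

/-- Delete the vertex `v` (and all incident edges). -/
def deleteVertex (G : SimpleGraph ℕ) (v : ℕ) : SimpleGraph ℕ where
  Adj x y := G.Adj x y ∧ x ≠ v ∧ y ≠ v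
  symm := ⟨fun _ _ h => ⟨h.1.symm, h.2.2, h.2.1⟩⟩
  loopless := ⟨fun x h => G.loopless.irrefl x h.1⟩

/-- The subgraphs of `G` isomorphic to `K4` (sets of four pairwise adjacent vertices). -/
def k4Subgraphs (G : SimpleGraph ℕ) : Set (Finset ℕ) :=
  {s | s.card = 4 ∧ ∀ a ∈ s, ∀ b ∈ s, a ≠ b → G.Adj a b}


lemma addApex_adj (G : SimpleGraph ℕ) (v a b c x y : ℕ) :
    (addApex G v a b c).Adj x y ↔ G.Adj x y ∨
      ((s(x,y) = s(v,a) ∨ s(x,y) = s(v,b) ∨ s(x,y) = s(v,c)) ∧ x ≠ y) := by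
  simp [addApex, SimpleGraph.fromEdgeSet_adj]

lemma triple_card_ne {a b c : ℕ} (h : ({a,b,c} : Finset ℕ).card = 3) :
    a ≠ b ∧ a ≠ c ∧ b ≠ c := by
  refine ⟨?_, ?_, ?_⟩ <;> rintro rfl
  · have h1 : ({a,a,c} : Finset ℕ) = {a,c} := by simp
    rw [h1] at h
    have := Finset.card_insert_le a ({c} : Finset ℕ)
    simp at this; omega
  · have h1 : ({a,b,a} : Finset ℕ) = {a,b} := by
      ext x; simp; tauto
    rw [h1] at h
    have := Finset.card_insert_le a ({b} : Finset ℕ)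
    simp at this; omega
  · have h1 : ({a,b,b} : Finset ℕ) = {a,b} := by simp
    rw [h1] at h
    have := Finset.card_insert_le a ({b} : Finset ℕ)
    simp at this; omega

lemma apollonian_key {G : SimpleGraph ℕ} {Fs : Set (Finset ℕ)} (h : ApollonianF G Fs) :
    G.support.Finite ∧ 4 ≤ G.support.ncard ∧
    (∀ t ∈ Fs, t.card = 3 ∧ ∀ x ∈ t, ∀ y ∈ t, x ≠ y → G.Adj x y) ∧
    (k4Subgraphs G).Finite ∧ (k4Subgraphs G).ncard = G.support.ncard - 3 := by
  induction h with
  | base =>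
    have hsupp : K4n.support = ↑(Finset.range 4) := by
      ext x
      simp only [SimpleGraph.mem_support, Finset.coe_range, Set.mem_Iio]
      constructor
      · rintro ⟨y, _, hx, _⟩; exact hx
      · intro hx; exact ⟨(x+1) % 4, by omega, hx, by omega⟩
    have hk4 : k4Subgraphs K4n = {Finset.range 4} := by
      ext s
      simp only [k4Subgraphs, Set.mem_setOf_eq, Set.mem_singleton_iff]
      constructor
      · rintro ⟨hcard, hadj⟩
        have hsub : s ⊆ Finset.range 4 := by
          intro x hx
          obtain ⟨y, hy, hyx⟩ := Finset.exists_mem_ne (s := s) (by omega) x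
          exact Finset.mem_range.mpr (hadj x hx y hy (Ne.symm hyx)).2.1
        exact Finset.eq_of_subset_of_card_le hsub (by simp [hcard])
      · rintro rfl
        refine ⟨by simp, fun p hp q hq hpq => ?_⟩
        simp only [Finset.mem_range] at hp hq
        exact ⟨hpq, hp, hq⟩
    refine ⟨hsupp ▸ (Finset.range 4).finite_toSet, ?_, ?_, ?_, ?_⟩
    · rw [hsupp, Set.ncard_coe_finset]; simp
    · intro t ht
      simp only [Set.mem_insert_iff, Set.mem_singleton_iff] at ht
      rcases ht with rfl | rfl | rfl | rfl <;>
        refine ⟨by decide, fun x hx y hy hxy => ?_⟩ <;>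
        · simp only [Finset.mem_insert, Finset.mem_singleton] at hx hy
          exact ⟨hxy, by omega, by omega⟩
    · rw [hk4]; exact Set.finite_singleton _
    · rw [hk4, hsupp, Set.ncard_coe_finset]; simp
  | subdivide G Fs a b c v hG hface hv ih =>
    obtain ⟨hfin, hc4, hfaces, hk4fin, hk4c⟩ := ih
    obtain ⟨h3, hadjt⟩ := hfaces _ hface
    obtain ⟨hab', hac', hbc'⟩ := triple_card_ne h3
    have hab : G.Adj a b := hadjt a (by simp) b (by simp) hab'
    have hac : G.Adj a c := hadjt a (by simp) c (by simp) hac'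
    have hbc : G.Adj b c := hadjt b (by simp) c (by simp) hbc'
    have hva : v ≠ a := fun h => hv b (h ▸ hab)
    have hvb : v ≠ b := fun h => hv a (h ▸ hab.symm)
    have hvc : v ≠ c := fun h => hv a (h ▸ hac.symm)
    have hvsupp : v ∉ G.support := fun ⟨y, hy⟩ => hv y hy
    set G' := addApex G v a b c with hG'
    have hAva : G'.Adj v a := (addApex_adj G v a b c v a).2 (Or.inr ⟨Or.inl rfl, hva⟩)
    have hAvb : G'.Adj v b := (addApex_adj G v a b c v b).2 (Or.inr ⟨Or.inr (Or.inl rfl), hvb⟩)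
    have hAvc : G'.Adj v c := (addApex_adj G v a b c v c).2 (Or.inr ⟨Or.inr (Or.inr rfl), hvc⟩)
    have hle : ∀ x y, G.Adj x y → G'.Adj x y := fun x y hxy =>
      (addApex_adj G v a b c x y).2 (Or.inl hxy)
    have hAdj_nov : ∀ x y, G'.Adj x y → x ≠ v → y ≠ v → G.Adj x y := by
      intro x y hxy hx hy
      rcases (addApex_adj G v a b c x y).1 hxy with h | ⟨h, _⟩
      · exact h
      · exfalso
        rcases h with h | h | h <;>
          rcases Sym2.eq_iff.1 h with ⟨h1, _⟩ | ⟨_, h2⟩ <;> simp_all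
    have hAdj_v : ∀ y, G'.Adj v y → y = a ∨ y = b ∨ y = c := by
      intro y hy
      rcases (addApex_adj G v a b c v y).1 hy with h | ⟨h, hne⟩
      · exact absurd h (hv y)
      · rcases h with h | h | h <;>
          rcases Sym2.eq_iff.1 h with ⟨h1, h2⟩ | ⟨h1, h2⟩ <;> simp_all
    have hsupp' : G'.support = insert v G.support := by
      ext x
      simp only [SimpleGraph.mem_support, Set.mem_insert_iff]
      constructor
      · rintro ⟨y, hxy⟩
        by_cases hx : x = v
        · exact Or.inl hx
        · by_cases hy : y = v
          · subst hy
            rcases hAdj_v x hxy.symm with rfl | rfl | rfl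
            · exact Or.inr ⟨b, hab⟩
            · exact Or.inr ⟨a, hab.symm⟩
            · exact Or.inr ⟨a, hac.symm⟩
          · exact Or.inr ⟨y, hAdj_nov x y hxy hx hy⟩
      · rintro (rfl | ⟨y, hy⟩)
        · exact ⟨a, hAva⟩
        · exact ⟨y, hle _ _ hy⟩
    have hcsupp' : G'.support.ncard = G.support.ncard + 1 := by
      rw [hsupp', Set.ncard_insert_of_notMem hvsupp hfin]
    have habcs : a ∈ G.support := ⟨b, hab⟩
    have hk4mem : ({v,a,b,c} : Finset ℕ) ∈ k4Subgraphs G' := by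
      constructor
      · rw [show ({v,a,b,c} : Finset ℕ) = insert v {a,b,c} from rfl,
          Finset.card_insert_of_notMem (by simp [hva, hvb, hvc]), h3]
      · intro x hx y hy hxy
        simp only [Finset.mem_insert, Finset.mem_singleton] at hx hy
        rcases hx with rfl | rfl | rfl | rfl <;> rcases hy with rfl | rfl | rfl | rfl <;>
          first
          | exact absurd rfl hxy
          | exact hAva | exact hAvb | exact hAvc
          | exact hAva.symm | exact hAvb.symm | exact hAvc.symm
          | exact hle _ _ hab | exact hle _ _ hac | exact hle _ _ hbc
          | exact hle _ _ hab.symm | exact hle _ _ hac.symm | exact hle _ _ hbc.symm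
    have hk4' : k4Subgraphs G' = insert ({v,a,b,c} : Finset ℕ) (k4Subgraphs G) := by
      ext s
      simp only [Set.mem_insert_iff]
      constructor
      · rintro ⟨hcard, hadj⟩
        by_cases hvs : v ∈ s
        · left
          have hsub : s ⊆ ({v,a,b,c} : Finset ℕ) := by
            intro x hx
            by_cases hxv : x = v
            · simp [hxv]
            · rcases hAdj_v x (hadj v hvs x hx (Ne.symm hxv)) with rfl | rfl | rfl <;> simp
          refine Finset.eq_of_subset_of_card_le hsub ?_
          rw [hcard]
          rw [show ({v,a,b,c} : Finset ℕ) = insert v {a,b,c} from rfl,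
            Finset.card_insert_of_notMem (by simp [hva, hvb, hvc]), h3]
        · right
          refine ⟨hcard, fun x hx y hy hxy => ?_⟩
          exact hAdj_nov x y (hadj x hx y hy hxy)
            (fun h => hvs (h ▸ hx)) (fun h => hvs (h ▸ hy))
      · rintro (rfl | ⟨hcard, hadj⟩)
        · exact hk4mem
        · exact ⟨hcard, fun x hx y hy hxy => hle _ _ (hadj x hx y hy hxy)⟩
    have hnotmem : ({v,a,b,c} : Finset ℕ) ∉ k4Subgraphs G := by
      rintro ⟨_, hadj⟩
      exact hv a (hadj v (by simp) a (by simp [hva, hvb, hvc]) hva)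
    refine ⟨?_, ?_, ?_, ?_, ?_⟩
    · rw [hsupp']; exact hfin.insert v
    · omega
    · intro t ht
      rcases ht with ⟨ht, _⟩ | ht
      · obtain ⟨h3t, hadjt'⟩ := hfaces t ht
        exact ⟨h3t, fun x hx y hy hxy => hle _ _ (hadjt' x hx y hy hxy)⟩
      · simp only [Set.mem_insert_iff, Set.mem_singleton_iff] at ht
        rcases ht with rfl | rfl | rfl
        · refine ⟨?_, ?_⟩
          · rw [show ({v,a,b} : Finset ℕ) = insert v {a,b} from rfl,
              Finset.card_insert_of_notMem (by simp [hva, hvb]),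
              Finset.card_insert_of_notMem (by simp [hab']), Finset.card_singleton]
          · intro x hx y hy hxy
            simp only [Finset.mem_insert, Finset.mem_singleton] at hx hy
            rcases hx with rfl | rfl | rfl <;> rcases hy with rfl | rfl | rfl <;>
              first
              | exact absurd rfl hxy
              | exact hAva | exact hAvb | exact hAva.symm | exact hAvb.symm
              | exact hle _ _ hab | exact hle _ _ hab.symm
        · refine ⟨?_, ?_⟩
          · rw [show ({v,a,c} : Finset ℕ) = insert v {a,c} from rfl,
              Finset.card_insert_of_notMem (by simp [hva, hvc]),
              Finset.card_insert_of_notMem (by simp [hac']), Finset.card_singleton]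
          · intro x hx y hy hxy
            simp only [Finset.mem_insert, Finset.mem_singleton] at hx hy
            rcases hx with rfl | rfl | rfl <;> rcases hy with rfl | rfl | rfl <;>
              first
              | exact absurd rfl hxy
              | exact hAva | exact hAvc | exact hAva.symm | exact hAvc.symm
              | exact hle _ _ hac | exact hle _ _ hac.symm
        · refine ⟨?_, ?_⟩
          · rw [show ({v,b,c} : Finset ℕ) = insert v {b,c} from rfl,
              Finset.card_insert_of_notMem (by simp [hvb, hvc]),
              Finset.card_insert_of_notMem (by simp [hbc']), Finset.card_singleton]
          · intro x hx y hy hxy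
            simp only [Finset.mem_insert, Finset.mem_singleton] at hx hy
            rcases hx with rfl | rfl | rfl <;> rcases hy with rfl | rfl | rfl <;>
              first
              | exact absurd rfl hxy
              | exact hAvb | exact hAvc | exact hAvb.symm | exact hAvc.symm
              | exact hle _ _ hbc | exact hle _ _ hbc.symm
    · rw [hk4']; exact hk4fin.insert _
    · rw [hk4', Set.ncard_insert_of_notMem hnotmem hk4fin, hcsupp']
      omega

/-- An Apollonian network with `n` vertices contains exactly `n - 3`
subgraphs isomorphic to `K4`. -/
theorem stmt_2 (G : SimpleGraph ℕ) (hG : IsApollonian G) (n : ℕ)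
    (hn : G.support.ncard = n) :
    (k4Subgraphs G).ncard = n - 3 := by
  obtain ⟨Fs, h⟩ := hG
  rw [← hn]
  exact (apollonian_key h).2.2.2.2
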